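/- Let F_0 be a Frobenius-type topological generator acting on the unit group U of the completion of the maximal unramified extension N̂_0 of a local field N (with algebraically closed residue field in N_0). Then the map z ↦ z^{F_0 - 1} := F_0(z)/z from U to U is surjective. -/

import Mathlib

open Polynomial in
private theorem my_root_AS (κ : Type*) [Field κ] [IsAlgClosed κ] (Q : ℕ) (hQ : 1 < Q)
    (a e c : κ) (ha : a ≠ 0) : ∃ β : κ, a * β ^ Q - e * β + c = 0 := by
  have hdeg : (C a * X ^ Q - (C e * X + C (-c))).degree = (Q : WithBot ℕ) := by
    rw [Polynomial.degree_sub_eq_left_of_degree_lt, Polynomial.degree_C_mul_X_pow _ ha]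
    rw [Polynomial.degree_C_mul_X_pow _ ha]
    exact lt_of_le_of_lt (Polynomial.degree_linear_le) (by exact_mod_cast hQ)
  obtain ⟨β, hβ⟩ := IsAlgClosed.exists_root (C a * X ^ Q - (C e * X + C (-c)))
    (by rw [hdeg]; exact_mod_cast (by omega : Q ≠ 0))
  refine ⟨β, ?_⟩
  simp only [Polynomial.IsRoot, Polynomial.eval_add, Polynomial.eval_sub, Polynomial.eval_mul,
    Polynomial.eval_pow, Polynomial.eval_C, Polynomial.eval_X] at hβ
  linear_combination hβ

open Polynomial in
private theorem my_root_base (κ : Type*) [Field κ] [IsAlgClosed κ] (Q : ℕ) (hQ : 1 < Q)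
    (u : κ) (hu : u ≠ 0) : ∃ β : κ, β ≠ 0 ∧ β ^ (Q - 1) = u := by
  have h1 : 0 < Q - 1 := by omega
  obtain ⟨β, hβ⟩ := IsAlgClosed.exists_root (X ^ (Q-1) - C u)
    (by rw [Polynomial.degree_X_pow_sub_C h1]; exact_mod_cast (by omega : Q - 1 ≠ 0))
  simp only [Polynomial.IsRoot, Polynomial.eval_sub, Polynomial.eval_pow, Polynomial.eval_C,
    Polynomial.eval_X, sub_eq_zero] at hβ
  refine ⟨β, fun h => hu ?_, hβ⟩
  rw [h, zero_pow (by omega)] at hβ; exact hβ.symm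

private theorem my_exists_chain {α : Type*} (P : ℕ → α → Prop) (Q : ℕ → α → α → Prop)
    (h0 : ∃ a, P 0 a) (hs : ∀ n a, P n a → ∃ b, P (n+1) b ∧ Q n a b) :
    ∃ f : ℕ → α, (∀ n, P n (f n)) ∧ ∀ n, Q n (f n) (f (n+1)) := by
  obtain ⟨a, ha⟩ := h0
  have : Nonempty α := ⟨a⟩
  choose! g hg1 hg2 using hs
  have hP : ∀ n, P n (Nat.rec a g n : α) := by
    intro n; induction n with
    | zero => exact ha
    | succ n ih => exact hg1 n _ ih
  exact ⟨fun n => Nat.rec a g n, hP, fun n => hg2 n _ (hP n)⟩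

theorem frobenius_sub_one_surjective_on_units
    (p k : ℕ) [Fact p.Prime] (hk : 0 < k)
    (R : Type*) [CommRing R] [IsDomain R] [IsLocalRing R] [IsDiscreteValuationRing R]
    [IsAdicComplete (IsLocalRing.maximalIdeal R) R]
    [IsAlgClosed (IsLocalRing.ResidueField R)]
    [CharP (IsLocalRing.ResidueField R) p]
    (F₀ : R ≃+* R)
    (hFrob : ∀ x : R, IsLocalRing.residue R (F₀ x)
      = (IsLocalRing.residue R x) ^ (p ^ k)) :
    ∀ u : Rˣ, ∃ z : Rˣ, F₀ (z : R) = (u : R) * (z : R) := by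
  intro u
  set M := IsLocalRing.maximalIdeal R with hM
  set Q := p ^ k with hQdef
  set res := IsLocalRing.residue R with hresdef
  have hp : p.Prime := Fact.out
  have hQ1 : 1 < Q := Nat.one_lt_pow (by omega) hp.one_lt
  -- residue basics
  have hres0 : ∀ x : R, x ∈ M ↔ res x = 0 := fun x => (Ideal.Quotient.eq_zero_iff_mem).symm
  have hunit_of_res : ∀ x : R, res x ≠ 0 → IsUnit x := by
    intro x hx
    by_contra h
    exact hx ((hres0 x).mp h)
  have hres_of_unit : ∀ x : R, IsUnit x → res x ≠ 0 := by
    intro x hx h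
    exact ((IsLocalRing.mem_maximalIdeal x).mp ((hres0 x).mpr h)) hx
  -- F₀ preserves powers of the maximal ideal
  have hFm : ∀ x ∈ M, F₀ x ∈ M := by
    intro x hx
    rw [hres0] at hx ⊢
    rw [hFrob, hx, zero_pow (by omega : Q ≠ 0)]
  have hFmn : ∀ n : ℕ, ∀ x ∈ M ^ n, F₀ x ∈ M ^ n := by
    intro n x hx
    have h1 : Ideal.map (F₀ : R →+* R) M ≤ M := Ideal.map_le_iff_le_comap.mpr (fun y hy => hFm y hy)
    have h2 := Ideal.mem_map_of_mem (F₀ : R →+* R) hx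
    rw [Ideal.map_pow] at h2
    exact Ideal.pow_right_mono h1 _ h2
  -- uniformizer
  obtain ⟨π, hπ⟩ := IsDiscreteValuationRing.exists_irreducible R
  have hspan : M = Ideal.span {π} := (IsDiscreteValuationRing.irreducible_iff_uniformizer π).mp hπ
  have hπM : π ∈ M := hspan ▸ Ideal.mem_span_singleton_self π
  have hpow : ∀ n : ℕ, M ^ n = Ideal.span {π ^ n} := by
    intro n; rw [hspan, Ideal.span_singleton_pow]
  -- F₀ π = π * w with w a unit
  obtain ⟨w, hw⟩ : π ∣ F₀ π := Ideal.mem_span_singleton.mp (hspan ▸ hFm π hπM)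
  have hwunit : IsUnit w := by
    have hinv : F₀.symm π ∈ M := by
      rw [hres0]
      have h := hFrob (F₀.symm π)
      rw [F₀.apply_symm_apply] at h
      have hπ0 : res π = 0 := (hres0 π).mp hπM
      rw [hπ0] at h
      exact pow_eq_zero_iff (by omega : Q ≠ 0) |>.mp h.symm ▸ rfl
    obtain ⟨s, hs⟩ : π ∣ F₀.symm π := Ideal.mem_span_singleton.mp (hspan ▸ hinv)
    have hπ0' : π * 1 = π * (w * F₀ s) := by
      conv_lhs => rw [mul_one, ← F₀.apply_symm_apply π, hs, map_mul, hw]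
      ring
    exact IsUnit.of_mul_eq_one _ (mul_left_cancel₀ hπ.ne_zero hπ0').symm
  -- the chain
  set P : ℕ → R → Prop := fun n z => IsUnit z ∧ F₀ z - (u : R) * z ∈ M ^ (n + 1) with hP
  have hbase : ∃ z : R, P 0 z := by
    obtain ⟨β, hβ0, hβ⟩ := my_root_base _ Q hQ1 (res (u : R)) (hres_of_unit _ u.isUnit)
    obtain ⟨z, hz⟩ := Ideal.Quotient.mk_surjective β
    have hzres : res z = β := hz
    refine ⟨z, hunit_of_res z (hzres ▸ hβ0), ?_⟩
    rw [pow_one, hres0, map_sub, hFrob, map_mul, hzres]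
    have : β ^ Q = res (u : R) * β := by
      calc β ^ Q = β ^ (Q - 1) * β := by
            rw [← pow_succ]; congr 1; omega
        _ = res (u : R) * β := by rw [hβ]
    rw [this]; ring
  have hstep : ∀ n z, P n z → ∃ z', P (n+1) z' ∧ z' - z ∈ M ^ (n+1) := by
    rintro n z ⟨hzu, hε⟩
    obtain ⟨c, hc⟩ : π ^ (n+1) ∣ F₀ z - (u : R) * z := by
      rw [← Ideal.mem_span_singleton, ← hpow]; exact hε
    -- solve residue equation
    have hane : res z ^ Q * res w ^ (n+1) ≠ 0 := by
      apply mul_ne_zero (pow_ne_zero _ (hres_of_unit z hzu)) (pow_ne_zero _ (hres_of_unit w hwunit))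
    obtain ⟨β, hβ⟩ := my_root_AS _ Q hQ1 (res z ^ Q * res w ^ (n+1))
      (res (u : R) * res z) (res c) hane
    obtain ⟨b, hb⟩ := Ideal.Quotient.mk_surjective β
    have hbres : res b = β := hb
    set t : R := b * π ^ (n+1) with ht
    have htM : t ∈ M := by
      have : π ^ (n+1) ∈ M := by
        rw [pow_succ]; exact Ideal.mul_mem_left _ _ hπM
      exact Ideal.mul_mem_left _ _ this
    have h1u : IsUnit (1 + t) := by
      apply hunit_of_res
      rw [map_add, map_one, (hres0 t).mp htM, add_zero]
      exact one_ne_zero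
    refine ⟨z * (1 + t), ⟨hzu.mul h1u, ?_⟩, ?_⟩
    · -- main congruence
      have hid : F₀ (z * (1 + t)) - (u : R) * (z * (1 + t))
          = π ^ (n+1) * (c + F₀ z * F₀ b * w ^ (n+1) - (u : R) * z * b) := by
        have h1 : F₀ (z * (1 + t)) = F₀ z * (1 + F₀ b * (π * w) ^ (n+1)) := by
          rw [ht, map_mul, map_add, map_one, map_mul, map_pow, hw]
        rw [h1, ht]
        linear_combination hc
      rw [hid]
      have hbr : c + F₀ z * F₀ b * w ^ (n+1) - (u : R) * z * b ∈ M := by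
        rw [hres0]
        simp only [map_add, map_sub, map_mul, map_pow, hFrob, hbres]
        linear_combination hβ
      rw [pow_succ]
      exact Ideal.mul_mem_mul (Ideal.pow_mem_pow hπM _) hbr
    · have : z * (1 + t) - z = z * t := by ring
      rw [this, ht, ← mul_assoc]
      rw [hpow]
      exact Ideal.mem_span_singleton.mpr ⟨z * b, by ring⟩
  obtain ⟨f, hf, hfc⟩ := my_exists_chain P (fun n a b => b - a ∈ M ^ (n+1)) hbase hstep
  -- Cauchy
  have hcauchy : ∀ i j : ℕ, i ≤ j → f j - f i ∈ M ^ i := by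
    intro i j hij
    induction j with
    | zero =>
      have : i = 0 := by omega
      subst this; simpa using Submodule.zero_mem _
    | succ j ih =>
      rcases Nat.lt_or_ge i (j+1) with h | h
      · have hij' : i ≤ j := by omega
        have h1 : f (j+1) - f j ∈ M ^ i :=
          Ideal.pow_le_pow_right (by omega) (hfc j)
        have h2 := ih hij'
        have : f (j+1) - f i = (f (j+1) - f j) + (f j - f i) := by ring
        rw [this]; exact Submodule.add_mem _ h1 h2
      · have : i = j + 1 := by omega
        subst this; simpa using Submodule.zero_mem _
  have hsmul : ∀ n : ℕ, (M ^ n • ⊤ : Submodule R R) = M ^ n := by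
    intro n; simp
  obtain ⟨L, hL⟩ := IsPrecomplete.prec (IsAdicComplete.toIsPrecomplete (I := M)) (f := f)
    (by
      intro i j hij
      rw [SModEq.sub_mem, hsmul]
      have := hcauchy i j hij
      simpa using Submodule.neg_mem _ this)
  have hLmem : ∀ n, f n - L ∈ M ^ n := by
    intro n
    have := hL n
    rw [SModEq.sub_mem, hsmul] at this
    exact this
  -- L is a unit
  have hLunit : IsUnit L := by
    apply hunit_of_res
    have h1 : res (f 1) - res L = 0 := by
      rw [← map_sub, ← hres0]
      simpa using hLmem 1
    have h2 : res L = res (f 1) := (sub_eq_zero.mp h1).symm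
    rw [h2]
    exact hres_of_unit _ (hf 1).1
  -- F₀ L = u L
  have hfinal : F₀ L - (u : R) * L = 0 := by
    apply IsHausdorff.haus (IsAdicComplete.toIsHausdorff (I := M))
    intro n
    rw [SModEq.zero, hsmul]
    have hdecomp : F₀ L - (u : R) * L
        = F₀ (L - f n) + (F₀ (f n) - (u : R) * f n) + (u : R) * (f n - L) := by
      rw [map_sub]; ring
    rw [hdecomp]
    apply Submodule.add_mem
    apply Submodule.add_mem
    · apply hFmn
      have := hLmem n
      simpa using Submodule.neg_mem _ this
    · exact Ideal.pow_le_pow_right (by omega) (hf n).2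
    · exact Ideal.mul_mem_left _ _ (hLmem n)
  exact ⟨hLunit.unit, by rw [IsUnit.unit_spec]; exact sub_eq_zero.mp hfinal⟩
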